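/- Let g : ℝ^d → ℝ be convex and differentiable with g(x) < 0 and g(y) < 0, and set u := |1/g(x)² − 1/g(y)²| and Δ := 1/g(x) − 1/g(y) − ⟨∇g(x), y − x⟩/g(x)². Then Δ ≥ (|g(y)| · min(g(x)², g(y)²) / 4) · u². -/
import Mathlib


open RealInnerProductSpace

theorem grad_ineq (dd : ℕ) (g : EuclideanSpace ℝ (Fin dd) → ℝ)
    (hconv : ConvexOn ℝ Set.univ g) (hdiff : Differentiable ℝ g)
    (x y : EuclideanSpace ℝ (Fin dd)) :
    ⟪gradient g x, y - x⟫ ≤ g y - g x := by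
  set c : ℝ → EuclideanSpace ℝ (Fin dd) := fun t => x + t • (y - x) with hc
  have hconvφ : ConvexOn ℝ Set.univ (g ∘ c) := by
    refine ((hconv.comp_affineMap (AffineMap.lineMap x y)).subset (by simp) convex_univ).congr ?_
    intro t _
    simp only [Function.comp_apply, AffineMap.lineMap_apply_module, hc]
    congr 1
    module
  have hcderiv : HasDerivAt c (y - x) 0 := by
    have h1 : HasDerivAt (fun t : ℝ => t • (y - x)) ((1:ℝ) • (y - x)) 0 :=
      (hasDerivAt_id (0:ℝ)).smul_const (y - x)
    simpa [hc, add_comm] using (h1.const_add x)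
  have hgfd : HasFDerivAt g (InnerProductSpace.toDual ℝ _ (gradient g x)) x :=
    (hasGradientAt_iff_hasFDerivAt.mp (hdiff x).hasGradientAt)
  have hc0 : c 0 = x := by simp [hc]
  have hφ : HasDerivAt (g ∘ c) ⟪gradient g x, y - x⟫ 0 := by
    have := (hc0 ▸ hgfd).comp_hasDerivAt 0 hcderiv
    simpa [hc0] using this
  have := hconvφ.le_slope_of_hasDerivAt (Set.mem_univ 0) (Set.mem_univ 1) one_pos hφ
  rw [slope_def_field] at this
  simpa [hc] using this

/-- lower bound on the Bregman residual of the inverse barrier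
via the difference of squared reciprocals.  For `g` convex and differentiable
with `g x < 0`, `g y < 0`, `u = |1/g(x)² − 1/g(y)²|` and
`Δ = 1/g(x) − 1/g(y) − ⟪∇g x, y − x⟫ / g(x)²`, one has
`Δ ≥ (|g y| · min(g(x)², g(y)²) / 4) · u²`. -/
theorem stmt_15 (dd : ℕ) (g : EuclideanSpace ℝ (Fin dd) → ℝ)
    (hconv : ConvexOn ℝ Set.univ g) (hdiff : Differentiable ℝ g)
    (x y : EuclideanSpace ℝ (Fin dd)) (hx : g x < 0) (hy : g y < 0)
    (u Δ : ℝ)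
    (hu : u = |1 / (g x)^2 - 1 / (g y)^2|)
    (hΔ : Δ = 1 / g x - 1 / g y - ⟪gradient g x, y - x⟫ / (g x)^2) :
    |g y| * min ((g x)^2) ((g y)^2) / 4 * u^2 ≤ Δ := by
  have ht : ⟪gradient g x, y - x⟫ ≤ g y - g x := grad_ineq dd g hconv hdiff x y
  set a := g x with ha
  set b := g y with hb
  have hane : a ≠ 0 := ne_of_lt hx
  have hbne : b ≠ 0 := ne_of_lt hy
  have ha2 : (0:ℝ) < a^2 := by positivity
  have hb2 : (0:ℝ) < b^2 := by positivity
  have hnb : (0:ℝ) < -b := by linarith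
  set m := min (a^2) (b^2) with hm
  have hm0 : 0 ≤ m := le_min ha2.le hb2.le
  have key : m * (a+b)^2 ≤ 4 * a^2 * b^2 := by
    rcases le_total (a^2) (b^2) with h | h
    · rw [hm, min_eq_left h]
      have hba : b ≤ a := by nlinarith
      nlinarith [sq_nonneg a, sq_nonneg (a - b), mul_nonneg (sq_nonneg a) (sq_nonneg (a + b))]
    · rw [hm, min_eq_right h]
      have hab : a ≤ b := by nlinarith
      nlinarith [sq_nonneg b, sq_nonneg (a - b)]
  have hΔ' : (a-b)^2 / (a^2 * (-b)) ≤ Δ := by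
    have heq : (1:ℝ)/a - 1/b - (b-a)/a^2 = (a-b)^2 / (a^2 * (-b)) := by
      field_simp
      ring
    have hdiv : ⟪gradient g x, y - x⟫ / a^2 ≤ (b-a)/a^2 := by gcongr
    rw [hΔ]
    linarith [heq]
  refine le_trans ?_ hΔ'
  rw [hu, abs_of_neg hy]
  have hL : (-b) * m / 4 * |1/a^2 - 1/b^2|^2
      = ((-b) * m * (a-b)^2 * (a+b)^2) / (4 * a^4 * b^4) := by
    rw [sq_abs]
    field_simp
    ring
  rw [hL, div_le_div_iff₀ (by positivity) (by positivity)]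
  nlinarith [mul_le_mul_of_nonneg_right key (show (0:ℝ) ≤ (a-b)^2 * (a^2*b^2) by positivity)]
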